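/- Let p be a prime with p ≥ n and let q = p^d. Then every elementary abelian p-subgroup E of GL_n(F_q) is contained in an F_q-linear elementary abelian p-subgroup of GL_n(F_q). -/

import Mathlib

open Matrix

/-- The truncated exponential `exp(X) = ∑_{i=0}^{p-1} X^i / i!`. -/
noncomputable def texp {k : Type*} [Field k] {n : ℕ} (p : ℕ)
    (X : Matrix (Fin n) (Fin n) k) : Matrix (Fin n) (Fin n) k :=
  ∑ i ∈ Finset.range p, ((Nat.factorial i : k)⁻¹) • X ^ i

/-- The truncated logarithm `log(u) = ∑_{i=1}^{p-1} (-1)^{i+1} (u-1)^i / i`. -/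
noncomputable def tlog {k : Type*} [Field k] {n : ℕ} (p : ℕ)
    (u : Matrix (Fin n) (Fin n) k) : Matrix (Fin n) (Fin n) k :=
  ∑ i ∈ Finset.Icc 1 (p - 1), ((-1 : k) ^ (i + 1) * (i : k)⁻¹) • (u - 1) ^ i

/-- For a unipotent matrix `g` and a scalar `λ`, the generalized power
`g^λ := exp(λ · log g)`. -/
noncomputable def upow {k : Type*} [Field k] {n : ℕ} (p : ℕ)
    (g : Matrix (Fin n) (Fin n) k) (lam : k) : Matrix (Fin n) (Fin n) k :=
  texp p (lam • tlog p g)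

/-- An elementary abelian `p`-subgroup: an abelian subgroup of exponent dividing `p`. -/
def IsElemAbelian (p : ℕ) {G : Type*} [Group G] (E : Subgroup G) : Prop :=
  (∀ g ∈ E, ∀ h ∈ E, g * h = h * g) ∧ ∀ g ∈ E, g ^ p = 1

/-- A subgroup `E ⊆ GL_n(k)` (of unipotent elements) is `k`-linear if `g^λ ∈ E`
for every `g ∈ E` and every `λ ∈ k`. -/
def IsLinearSubgroup {k : Type*} [Field k] {n : ℕ} (p : ℕ)
    (E : Subgroup (GL (Fin n) k)) : Prop :=
  ∀ g ∈ E, ∀ lam : k, ∃ g' ∈ E,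
    (g' : Matrix (Fin n) (Fin n) k) = upow p (g : Matrix (Fin n) (Fin n) k) lam

/-- A nilpotent `n × n` matrix satisfies `X ^ n = 0`. -/
lemma nilpMatrix_pow_eq_zero {k : Type*} [Field k] {n : ℕ}
    {X : Matrix (Fin n) (Fin n) k} (h : IsNilpotent X) : X ^ n = 0 := by
  have h1 : IsNilpotent (Matrix.toLinAlgEquiv' X : Module.End k (Fin n → k)) :=
    h.map (Matrix.toLinAlgEquiv' : Matrix (Fin n) (Fin n) k ≃ₐ[k] _)
  have h2 := h1.charpoly_eq_X_pow_finrank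
  have h3 := LinearMap.aeval_self_charpoly (Matrix.toLinAlgEquiv' X)
  rw [h2, Polynomial.aeval_X_pow, Module.finrank_fin_fun] at h3
  apply (Matrix.toLinAlgEquiv' : Matrix (Fin n) (Fin n) k ≃ₐ[k] _).injective
  rw [map_pow, map_zero]
  exact h3

/-- Let `p ≥ n` be a prime and `q = p^d`.  Every elementary abelian
`p`-subgroup of `GL_n(𝔽_q)` is contained in an `𝔽_q`-linear elementary abelian
`p`-subgroup of `GL_n(𝔽_q)`. -/
theorem exists_linear_elementary_abelian_superset {p d n : ℕ} (hp : p.Prime) (hnp : n ≤ p)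
    {k : Type*} [Field k] [Fintype k] [CharP k p] (hq : Fintype.card k = p ^ d)
    (E : Subgroup (GL (Fin n) k)) (hE : IsElemAbelian p E) :
    ∃ E' : Subgroup (GL (Fin n) k),
      IsElemAbelian p E' ∧ IsLinearSubgroup p E' ∧ E ≤ E' := by
  classical
  haveI : Fact p.Prime := ⟨hp⟩
  rcases Nat.eq_zero_or_pos n with hn | hn
  · subst hn
    have hms : ∀ (M N : Matrix (Fin 0) (Fin 0) k), M = N := fun M N => by
      ext i; exact i.elim0
    refine ⟨⊤, ⟨fun g _ h _ => Units.ext (hms _ _), fun g _ => Units.ext (hms _ _)⟩,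
      fun g _ lam => ⟨g, Subgroup.mem_top g, hms _ _⟩, le_top⟩
  haveI : Nonempty (Fin n) := ⟨⟨0, hn⟩⟩
  set s : Set (Matrix (Fin n) (Fin n) k) :=
    (fun g : GL (Fin n) k => (g : Matrix (Fin n) (Fin n) k)) '' (E : Set (GL (Fin n) k)) with hs
  set A := Algebra.adjoin k s with hA
  have hsc : ∀ a ∈ s, ∀ b ∈ s, a * b = b * a := by
    rintro a ⟨g, hg, rfl⟩ b ⟨h', hh, rfl⟩
    have h1 := hE.1 g hg h' hh
    rw [← Units.val_mul, ← Units.val_mul, h1]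
  have hcomm : ∀ x ∈ A, ∀ y ∈ A, Commute x y := by
    intro x hx y hy
    refine Algebra.commute_of_mem_adjoin_of_forall_mem_commute hy ?_
    intro b hb
    exact (Algebra.commute_of_mem_adjoin_of_forall_mem_commute hx
      (fun c hc => hsc b hb c hc)).symm
  -- unipotent elements have order dividing p
  have key : ∀ u : GL (Fin n) k, IsNilpotent ((u : Matrix (Fin n) (Fin n) k) - 1) →
      u ^ p = 1 := by
    intro u hu
    have h1 : ((u : Matrix (Fin n) (Fin n) k) - 1) ^ p = 0 := by
      have h2 := nilpMatrix_pow_eq_zero hu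
      calc ((u : Matrix (Fin n) (Fin n) k) - 1) ^ p
          = ((u : Matrix (Fin n) (Fin n) k) - 1) ^ n *
            ((u : Matrix (Fin n) (Fin n) k) - 1) ^ (p - n) := by
            rw [← pow_add, Nat.add_sub_cancel' hnp]
        _ = 0 := by rw [h2, zero_mul]
    apply Units.ext
    rw [Units.val_pow_eq_pow_val, Units.val_one]
    have h3 := add_pow_char_of_commute (p := p)
      (x := (u : Matrix (Fin n) (Fin n) k) - 1) (y := (1 : Matrix (Fin n) (Fin n) k))
      (Commute.one_right _)
    rw [sub_add_cancel] at h3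
    rw [h3, h1, one_pow, zero_add]
  set P : GL (Fin n) k → Prop := fun u =>
    ((u : Matrix (Fin n) (Fin n) k) ∈ A ∧
      IsNilpotent ((u : Matrix (Fin n) (Fin n) k) - 1)) with hP
  have inv_mem : ∀ u, P u → P u⁻¹ := by
    intro u hu
    set N : Matrix (Fin n) (Fin n) k := 1 - (u : Matrix (Fin n) (Fin n) k) with hNdef
    have hNA : N ∈ A := A.sub_mem A.one_mem hu.1
    have hNnil : IsNilpotent N := by
      rw [hNdef, ← neg_sub]; exact hu.2.neg
    have hNn : N ^ n = 0 := nilpMatrix_pow_eq_zero hNnil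
    set X : Matrix (Fin n) (Fin n) k := ∑ i ∈ Finset.range n, N ^ i with hXdef
    have hXA : X ∈ A := A.sum_mem (fun i _ => A.pow_mem hNA i)
    have hu1 : (u : Matrix (Fin n) (Fin n) k) = 1 - N := by rw [hNdef, sub_sub_cancel]
    have hmul : (u : Matrix (Fin n) (Fin n) k) * X = 1 := by
      have h3 : (N - 1) * X = N ^ n - 1 := mul_geom_sum N n
      have h4 : (1 - N) * X = 1 - N ^ n := by
        have h5 := congrArg Neg.neg h3
        rw [← neg_mul, neg_sub] at h5
        rw [h5, neg_sub]
      rw [hu1, h4, hNn, sub_zero]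
    have hinv : ((u⁻¹ : GL (Fin n) k) : Matrix (Fin n) (Fin n) k) = X :=
      Units.inv_eq_of_mul_eq_one_right hmul
    have hX1 : X - 1 = N * X := by
      have h6 : N * X = 1 * X - (u : Matrix (Fin n) (Fin n) k) * X := by
        rw [hNdef, sub_mul]
      rw [h6, one_mul, hmul]
    have hCNX : Commute N X :=
      Commute.sum_right _ _ _ (fun i _ => (Commute.refl N).pow_right i)
    constructor
    · rw [hinv]; exact hXA
    · rw [hinv, hX1]
      exact hCNX.isNilpotent_mul_right hNnil
  have mul_mem : ∀ u v, P u → P v → P (u * v) := by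
    intro u v hu hv
    have h1 : ((u * v : GL (Fin n) k) : Matrix (Fin n) (Fin n) k)
        = (u : Matrix (Fin n) (Fin n) k) * (v : Matrix (Fin n) (Fin n) k) := Units.val_mul u v
    have hAu : (u : Matrix (Fin n) (Fin n) k) - 1 ∈ A := A.sub_mem hu.1 A.one_mem
    have hAv : (v : Matrix (Fin n) (Fin n) k) - 1 ∈ A := A.sub_mem hv.1 A.one_mem
    have c1 : Commute ((u : Matrix (Fin n) (Fin n) k) - 1)
        ((v : Matrix (Fin n) (Fin n) k) - 1) := hcomm _ hAu _ hAv
    constructor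
    · rw [h1]; exact A.mul_mem hu.1 hv.1
    · rw [h1]
      have hid : (u : Matrix (Fin n) (Fin n) k) * (v : Matrix (Fin n) (Fin n) k) - 1 =
          ((u : Matrix (Fin n) (Fin n) k) - 1) * ((v : Matrix (Fin n) (Fin n) k) - 1) +
          (((u : Matrix (Fin n) (Fin n) k) - 1) + ((v : Matrix (Fin n) (Fin n) k) - 1)) := by
        noncomm_ring
      rw [hid]
      exact Commute.isNilpotent_add
        (hcomm _ (A.mul_mem hAu hAv) _ (A.add_mem hAu hAv))
        (c1.isNilpotent_mul_right hu.2)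
        (Commute.isNilpotent_add c1 hu.2 hv.2)
  set E' : Subgroup (GL (Fin n) k) :=
    { carrier := {u | P u}
      mul_mem' := fun {a b} ha hb => mul_mem a b ha hb
      one_mem' := by
        constructor
        · rw [Units.val_one]; exact A.one_mem
        · rw [Units.val_one, sub_self]; exact ⟨1, by rw [pow_one]⟩
      inv_mem' := fun {a} ha => inv_mem a ha } with hE'
  have hmem : ∀ u : GL (Fin n) k, u ∈ E' ↔ P u := fun u => Iff.rfl
  have hEle : E ≤ E' := by
    intro g hg
    rw [hmem]
    refine ⟨Algebra.subset_adjoin ⟨g, hg, rfl⟩, ⟨p, ?_⟩⟩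
    have hgp : (g : Matrix (Fin n) (Fin n) k) ^ p = 1 := by
      rw [← Units.val_pow_eq_pow_val, hE.2 g hg, Units.val_one]
    rw [sub_pow_char_of_commute p (Commute.one_right _), hgp, one_pow, sub_self]
  have hEA : IsElemAbelian p E' := by
    constructor
    · intro g hg h hh
      rw [hmem] at hg hh
      exact Units.ext (by rw [Units.val_mul, Units.val_mul]; exact hcomm _ hg.1 _ hh.1)
    · intro g hg
      rw [hmem] at hg
      exact key g hg.2
  have hLin : IsLinearSubgroup p E' := by
    intro g hg lam
    rw [hmem] at hg
    have huA : (g : Matrix (Fin n) (Fin n) k) - 1 ∈ A := A.sub_mem hg.1 A.one_mem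
    have hunil : IsNilpotent ((g : Matrix (Fin n) (Fin n) k) - 1) := hg.2
    have hnil_pow : ∀ Z : Matrix (Fin n) (Fin n) k, IsNilpotent Z →
        ∀ m : ℕ, m ≠ 0 → IsNilpotent (Z ^ m) := by
      intro Z hZ m hm
      obtain ⟨t, ht⟩ := hZ
      exact ⟨t, by rw [← pow_mul, mul_comm, pow_mul, ht, zero_pow hm]⟩
    have memA : ∀ m : ℕ, ∀ c : k, c • ((g : Matrix (Fin n) (Fin n) k) - 1) ^ m ∈ A :=
      fun m c => A.smul_mem (A.pow_mem huA m) c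
    have hLA : tlog p (g : Matrix (Fin n) (Fin n) k) ∈ A := by
      unfold tlog
      exact A.sum_mem (fun i _ => memA i _)
    have hLnil : IsNilpotent (tlog p (g : Matrix (Fin n) (Fin n) k)) := by
      unfold tlog
      refine Commute.isNilpotent_sum (fun i hi => ?_)
        (fun i j hi hj => hcomm _ (memA i _) _ (memA j _))
      exact (hnil_pow _ hunil i (Nat.one_le_iff_ne_zero.mp (Finset.mem_Icc.mp hi).1)).smul _
    set Y : Matrix (Fin n) (Fin n) k := lam • tlog p (g : Matrix (Fin n) (Fin n) k) with hY
    have hYA : Y ∈ A := A.smul_mem hLA lam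
    have hYnil : IsNilpotent Y := hLnil.smul lam
    have memAY : ∀ m : ℕ, ∀ c : k, c • Y ^ m ∈ A :=
      fun m c => A.smul_mem (A.pow_mem hYA m) c
    set M : Matrix (Fin n) (Fin n) k := texp p Y with hM
    have hMA : M ∈ A := by
      rw [hM]; unfold texp
      exact A.sum_mem (fun i _ => memAY i _)
    have hM1 : M - 1 = ∑ i ∈ Finset.range p \ {0}, ((Nat.factorial i : k)⁻¹) • Y ^ i := by
      have h0 : (0 : ℕ) ∈ Finset.range p := Finset.mem_range.mpr hp.pos
      rw [hM]; unfold texp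
      rw [Finset.sum_eq_sum_sdiff_singleton_add h0]
      have hf0 : ((Nat.factorial 0 : k)⁻¹) • Y ^ 0 = 1 := by
        simp [Nat.factorial]
      rw [hf0, add_sub_cancel_right]
    have hMnil : IsNilpotent (M - 1) := by
      rw [hM1]
      refine Commute.isNilpotent_sum (fun i hi => ?_)
        (fun i j hi hj => hcomm _ (memAY i _) _ (memAY j _))
      have hi0 : i ≠ 0 := by
        simp only [Finset.mem_sdiff, Finset.mem_singleton] at hi
        exact hi.2
      exact (hnil_pow Y hYnil i hi0).smul _
    have hMunit : IsUnit M := by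
      have h7 := hMnil.isUnit_one_add
      have h8 : (1 : Matrix (Fin n) (Fin n) k) + (M - 1) = M := by abel
      rwa [h8] at h7
    refine ⟨hMunit.unit, ?_, ?_⟩
    · rw [hmem]
      constructor
      · rw [hMunit.unit_spec]; exact hMA
      · rw [hMunit.unit_spec]; exact hMnil
    · rw [hMunit.unit_spec, hM, hY]
      rfl
  exact ⟨E', hEA, hLin, hEle⟩
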